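/- If g : ℝ^d → ℝ is convex, differentiable, and α-smooth, then for all w, w' ∈ ℝ^d, ⟨w - w', ∇g(w) - ∇g(w')⟩ ≥ (1/α)‖∇g(w) - ∇g(w')‖². -/

import Mathlib

open Set

variable {F : Type*} [NormedAddCommGroup F] [InnerProductSpace ℝ F] [CompleteSpace F]

lemma line_hasDerivAt (g : F → ℝ) (hdiff : Differentiable ℝ g) (x y : F) (t : ℝ) :
    HasDerivAt (fun t : ℝ => g (x + t • (y - x)))
      (inner ℝ (gradient g (x + t • (y - x))) (y - x) : ℝ) t := by
  have hc : HasDerivAt (fun t : ℝ => x + t • (y - x)) (y - x) t := by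
    simpa using ((hasDerivAt_id t).smul_const (y - x)).const_add x
  have hg := (hdiff (x + t • (y - x))).hasGradientAt
  have := hg.hasFDerivAt.comp_hasDerivAt t hc
  rw [InnerProductSpace.toDual_apply_apply] at this
  exact this

/-- subgradient inequality -/
lemma subgrad (g : F → ℝ) (hconv : ConvexOn ℝ Set.univ g) (hdiff : Differentiable ℝ g)
    (x y : F) : g x + inner ℝ (gradient g x) (y - x) ≤ g y := by
  have hψ : HasDerivAt (fun t : ℝ => g (x + t • (y - x)))
      (inner ℝ (gradient g x) (y - x) : ℝ) 0 := by
    simpa using line_hasDerivAt g hdiff x y 0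
  have hslope := hasDerivAt_iff_tendsto_slope.mp hψ
  have hslope' : Filter.Tendsto (slope (fun t : ℝ => g (x + t • (y - x))) 0)
      (nhdsWithin 0 (Ioi 0)) (nhds (inner ℝ (gradient g x) (y - x) : ℝ)) :=
    hslope.mono_left (nhdsWithin_mono 0 (fun t ht => ne_of_gt ht))
  have key : (inner ℝ (gradient g x) (y - x) : ℝ) ≤ g y - g x := by
    refine le_of_tendsto hslope' ?_
    filter_upwards [Ioo_mem_nhdsGT_of_mem
      (by norm_num : (0:ℝ) ∈ Ico (0:ℝ) 1)] with t ht
    have h0 : (0:ℝ) < t := ht.1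
    have h1 : t ≤ 1 := le_of_lt ht.2
    have hcv' : g (x + t • (y - x)) ≤ (1 - t) * g x + t * g y := by
      have hx : x + t • (y - x) = (1 - t) • x + t • y := by module
      rw [hx]
      simpa using hconv.2 (mem_univ x) (mem_univ y)
        (by linarith : (0:ℝ) ≤ 1 - t) h0.le (by ring)
    rw [slope_def_field, sub_zero, div_le_iff₀ h0]
    simp only [zero_smul, add_zero]
    linarith [hcv']
  linarith

/-- descent lemma -/
lemma descent (g : F → ℝ) (α : ℝ) (hα : 0 < α) (hdiff : Differentiable ℝ g)
    (hsmooth : ∀ w w' : F, ‖gradient g w - gradient g w'‖ ≤ α * ‖w - w'‖)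
    (x y : F) :
    g y ≤ g x + inner ℝ (gradient g x) (y - x) + α / 2 * ‖y - x‖ ^ 2 := by
  set φ : ℝ → ℝ := fun t =>
    g (x + t • (y - x)) - t * inner ℝ (gradient g x) (y - x) - α / 2 * t ^ 2 * ‖y - x‖ ^ 2
    with hφ
  have hφd : ∀ t : ℝ, HasDerivAt φ
      ((inner ℝ (gradient g (x + t • (y - x)) - gradient g x) (y - x) : ℝ)
        - α * t * ‖y - x‖ ^ 2) t := by
    intro t
    have h1 := line_hasDerivAt g hdiff x y t
    have h2 : HasDerivAt (fun t : ℝ => t * (inner ℝ (gradient g x) (y - x) : ℝ))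
        (inner ℝ (gradient g x) (y - x) : ℝ) t := by
      simpa using (hasDerivAt_id t).mul_const (inner ℝ (gradient g x) (y - x) : ℝ)
    have h3 := (((hasDerivAt_pow 2 t).const_mul (α / 2)).mul_const (‖y - x‖ ^ 2) :
      HasDerivAt (fun t : ℝ => α / 2 * t ^ 2 * ‖y - x‖ ^ 2) _ t)
    have := (h1.sub h2).sub h3
    convert this using 1
    · rfl
    · rfl
    · rfl
    rw [inner_sub_left]; push_cast; ring
  have hmono : AntitoneOn φ (Icc 0 1) := by
    apply antitoneOn_of_deriv_nonpos (convex_Icc 0 1)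
    · exact fun t _ => ((hφd t).continuousAt).continuousWithinAt
    · exact fun t _ => ((hφd t).differentiableAt).differentiableWithinAt
    · intro t ht
      rw [interior_Icc] at ht
      rw [(hφd t).deriv]
      have hb : ‖gradient g (x + t • (y - x)) - gradient g x‖ ≤ α * t * ‖y - x‖ := by
        have := hsmooth (x + t • (y - x)) x
        simpa [add_sub_cancel_left, norm_smul, Real.norm_eq_abs, abs_of_pos ht.1,
          mul_assoc] using this
      have hinner : (inner ℝ (gradient g (x + t • (y - x)) - gradient g x) (y - x) : ℝ)
          ≤ α * t * ‖y - x‖ ^ 2 := by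
        calc (inner ℝ (gradient g (x + t • (y - x)) - gradient g x) (y - x) : ℝ)
            ≤ ‖gradient g (x + t • (y - x)) - gradient g x‖ * ‖y - x‖ :=
              real_inner_le_norm _ _
          _ ≤ α * t * ‖y - x‖ * ‖y - x‖ :=
              mul_le_mul_of_nonneg_right hb (norm_nonneg _)
          _ = α * t * ‖y - x‖ ^ 2 := by ring
      linarith
  have h01 := hmono (left_mem_Icc.mpr zero_le_one) (right_mem_Icc.mpr zero_le_one) zero_le_one
  simp only [hφ, zero_smul, add_zero, one_smul, zero_mul, sub_zero, one_pow, mul_one,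
    mul_zero] at h01
  have hyy : x + (y - x) = y := by abel
  rw [hyy] at h01
  nlinarith [h01]

theorem cocoercivity (d : ℕ) (α : ℝ) (hα : 0 < α)
    (g : EuclideanSpace ℝ (Fin d) → ℝ)
    (hconv : ConvexOn ℝ Set.univ g)
    (hdiff : Differentiable ℝ g)
    (hsmooth : ∀ w w', ‖gradient g w - gradient g w'‖ ≤ α * ‖w - w'‖) :
    ∀ w w' : EuclideanSpace ℝ (Fin d),
      (1 / α) * ‖gradient g w - gradient g w'‖ ^ 2 ≤
        inner ℝ (w - w') (gradient g w - gradient g w') := by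
  have key : ∀ w w' : EuclideanSpace ℝ (Fin d),
      g w + inner ℝ (gradient g w) (w' - w) + 1 / (2 * α) * ‖gradient g w' - gradient g w‖ ^ 2
        ≤ g w' := by
    intro w w'
    set a := gradient g w
    set b := gradient g w'
    set y := w' - (1 / α) • (b - a) with hy
    have h1 := subgrad g hconv hdiff w y
    have h2 := descent g α hα hdiff hsmooth w' y
    have hyw' : y - w' = -((1 / α) • (b - a)) := by rw [hy]; abel
    have hnorm : ‖y - w'‖ ^ 2 = (1 / α) ^ 2 * ‖b - a‖ ^ 2 := by
      rw [hyw', norm_neg, norm_smul]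
      simp [abs_of_pos (by positivity : (0:ℝ) < 1/α), mul_pow]
    have hib : (inner ℝ b (y - w') : ℝ) = -(1 / α) * inner ℝ b (b - a) := by
      rw [hyw', inner_neg_right, real_inner_smul_right]; ring
    have hiy : (inner ℝ a (y - w) : ℝ) =
        inner ℝ a (w' - w) - (1 / α) * inner ℝ a (b - a) := by
      have hyw : y - w = (w' - w) - (1/α) • (b - a) := by rw [hy]; abel
      rw [hyw, inner_sub_right, real_inner_smul_right]
    have hba : (1/α : ℝ) * ((inner ℝ b (b - a) : ℝ) - inner ℝ a (b - a))
        = (1/α) * ‖b - a‖ ^ 2 := by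
      rw [← inner_sub_left, real_inner_self_eq_norm_sq]
    rw [hib, hnorm] at h2
    rw [hiy] at h1
    have hα2 : α / 2 * ((1 / α) ^ 2 * ‖b - a‖ ^ 2) = 1 / (2 * α) * ‖b - a‖ ^ 2 := by
      field_simp
    have h2α : (1/α:ℝ) * ‖b - a‖ ^ 2 = 2 * (1/(2*α) * ‖b - a‖ ^ 2) := by
      field_simp
    linarith [h1, h2, hba, hα2, h2α]
  intro w w'
  have k1 := key w w'
  have k2 := key w' w
  have hn : ‖gradient g w - gradient g w'‖ = ‖gradient g w' - gradient g w‖ :=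
    norm_sub_rev _ _
  have hsum : 1 / (2 * α) * ‖gradient g w' - gradient g w‖ ^ 2
      + 1 / (2 * α) * ‖gradient g w - gradient g w'‖ ^ 2
      = 1 / α * ‖gradient g w - gradient g w'‖ ^ 2 := by
    rw [hn]; field_simp; ring
  have hadd : (inner ℝ (gradient g w) (w' - w) : ℝ) + inner ℝ (gradient g w') (w - w')
      + 1 / α * ‖gradient g w - gradient g w'‖ ^ 2 ≤ 0 := by
    linarith [k1, k2, hsum]
  have hexp : (inner ℝ (w - w') (gradient g w - gradient g w') : ℝ)
      = -(inner ℝ (gradient g w) (w' - w) + inner ℝ (gradient g w') (w - w')) := by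
    rw [inner_sub_right, real_inner_comm _ (gradient g w), real_inner_comm _ (gradient g w')]
    have hww : (w' - w : EuclideanSpace ℝ (Fin d)) = -(w - w') := by abel
    rw [hww, inner_neg_left]
    ring
  linarith [hadd, hexp.ge, hexp.le]
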